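/- Let n ≥ 2 be an integer, let γ ≥ λ > 0, and set α = (γ/λ)^{1/n}. Let φ : (0,1) → ℝ be a positive C² function satisfying φ(β)(1 + (φ'(β)/(n−1))²)^{(n−1)/2} = 1/γ for all β ∈ (0,1), and let u : (0,1) → ℝ be a continuous positive viscosity supersolution of ψ(1 + (ψ'/(n−1))²)^{(n−1)/2} = 1/λ on (0,1). If liminf_{β→0⁺} u(β)/(αφ(β)) ≥ 1 and liminf_{β→1⁻} u(β)/(αφ(β)) ≥ 1, then u(β) ≥ α φ(β) for all β ∈ (0,1). -/

import Mathlib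

open Filter

/-- `u` is a viscosity supersolution of `ψ(1 + (ψ'/(n−1))²)^((n−1)/2) = 1/λ` on `I`:
for every `β₀ ∈ I` and every `C²` test function `ψ` with `ψ ≤ u` near `β₀` (within `I`)
and `ψ(β₀) = u(β₀)`, one has `ψ(β₀)(1 + (ψ'(β₀)/(n−1))²)^((n−1)/2) ≥ 1/λ`. -/
def IsViscositySupersolution1 (n : ℕ) (lam : ℝ) (I : Set ℝ) (u : ℝ → ℝ) : Prop :=
  ∀ β₀ ∈ I, ∀ ψ : ℝ → ℝ, ContDiffAt ℝ 2 ψ β₀ →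
    (∀ᶠ β in nhdsWithin β₀ I, ψ β ≤ u β) → ψ β₀ = u β₀ →
    ψ β₀ * (1 + (deriv ψ β₀ / ((n : ℝ) - 1)) ^ 2) ^ (((n : ℝ) - 1) / 2) ≥ 1 / lam

lemma visc_key (n : ℕ) (hn : 2 ≤ n) (α s p : ℝ) (hα : 1 ≤ α) (hs : 0 < s) (hsα : s < α) :
    s * (1 + (s * p) ^ 2) ^ (((n : ℝ) - 1) / 2) < α ^ n * (1 + p ^ 2) ^ (((n : ℝ) - 1) / 2) := by
  set A : ℝ := ((n : ℝ) - 1) / 2 with hA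
  have hn1 : (1 : ℝ) ≤ (n : ℝ) - 1 := by
    have : (2 : ℝ) ≤ (n : ℝ) := by exact_mod_cast hn
    linarith
  have hApos : 0 < A := by rw [hA]; linarith
  have hbase : (0 : ℝ) < 1 + p ^ 2 := by positivity
  have hbA : (0 : ℝ) < (1 + p ^ 2) ^ A := Real.rpow_pos_of_pos hbase A
  rcases le_or_gt s 1 with h1 | h1
  · have h2 : (1 + (s * p) ^ 2) ^ A ≤ (1 + p ^ 2) ^ A := by
      apply Real.rpow_le_rpow (by positivity) _ hApos.le
      have hs2 : s ^ 2 ≤ 1 := pow_le_one₀ hs.le h1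
      nlinarith [sq_nonneg p]
    have h3 : s < α ^ n := lt_of_lt_of_le hsα (le_self_pow₀ hα (by omega))
    calc s * (1 + (s * p) ^ 2) ^ A ≤ s * (1 + p ^ 2) ^ A := by
          exact mul_le_mul_of_nonneg_left h2 hs.le
      _ < α ^ n * (1 + p ^ 2) ^ A := by exact mul_lt_mul_of_pos_right h3 hbA
  · have h2 : (1 + (s * p) ^ 2) ≤ s ^ 2 * (1 + p ^ 2) := by nlinarith
    have h3 : (1 + (s * p) ^ 2) ^ A ≤ (s ^ 2 * (1 + p ^ 2)) ^ A :=
      Real.rpow_le_rpow (by positivity) h2 hApos.le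
    have h4 : (s ^ 2 * (1 + p ^ 2)) ^ A = s ^ (n - 1 : ℕ) * (1 + p ^ 2) ^ A := by
      rw [Real.mul_rpow (by positivity) hbase.le]
      congr 1
      rw [← Real.rpow_natCast s 2, ← Real.rpow_mul hs.le, ← Real.rpow_natCast s (n - 1)]
      congr 1
      have : ((n - 1 : ℕ) : ℝ) = (n : ℝ) - 1 := by
        have : 1 ≤ n := by omega
        push_cast [this]; ring
      rw [this, hA]; ring
    have h5 : s * (s ^ (n - 1 : ℕ) * (1 + p ^ 2) ^ A) = s ^ n * (1 + p ^ 2) ^ A := by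
      rw [← mul_assoc]
      congr 1
      rw [← pow_succ']
      congr 1
      omega
    have h6 : s ^ n < α ^ n := pow_lt_pow_left₀ hsα hs.le (by omega)
    calc s * (1 + (s * p) ^ 2) ^ A ≤ s * (s ^ (n - 1 : ℕ) * (1 + p ^ 2) ^ A) := by
          exact mul_le_mul_of_nonneg_left (h3.trans_eq h4) hs.le
      _ = s ^ n * (1 + p ^ 2) ^ A := h5
      _ < α ^ n * (1 + p ^ 2) ^ A := mul_lt_mul_of_pos_right h6 hbA

theorem first_order_viscosity_comparison
    (n : ℕ) (hn : 2 ≤ n) (γ lam : ℝ) (hlam : 0 < lam) (hγlam : lam ≤ γ)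
    (α : ℝ) (hα : α = (γ / lam) ^ ((1 : ℝ) / (n : ℝ)))
    (u φ : ℝ → ℝ)
    (hφ_pos : ∀ β ∈ Set.Ioo (0 : ℝ) 1, 0 < φ β)
    (hφ_C2 : ∀ β ∈ Set.Ioo (0 : ℝ) 1, ContDiffAt ℝ 2 φ β)
    (hφ_eq : ∀ β ∈ Set.Ioo (0 : ℝ) 1,
      φ β * (1 + (deriv φ β / ((n : ℝ) - 1)) ^ 2) ^ (((n : ℝ) - 1) / 2) = 1 / γ)
    (hu_cont : ContinuousOn u (Set.Ioo 0 1))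
    (hu_pos : ∀ β ∈ Set.Ioo (0 : ℝ) 1, 0 < u β)
    (hu_visc : IsViscositySupersolution1 n lam (Set.Ioo 0 1) u)
    (h0 : (1 : EReal) ≤ Filter.liminf (fun β => ((u β / (α * φ β) : ℝ) : EReal))
      (nhdsWithin 0 (Set.Ioo (0 : ℝ) 1)))
    (h1 : (1 : EReal) ≤ Filter.liminf (fun β => ((u β / (α * φ β) : ℝ) : EReal))
      (nhdsWithin 1 (Set.Ioo (0 : ℝ) 1))) :
    ∀ β ∈ Set.Ioo (0 : ℝ) 1, α * φ β ≤ u β := by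
  by_contra hcon
  push_neg at hcon
  obtain ⟨β₁, hβ₁, hβ₁lt⟩ := hcon
  have hγ : 0 < γ := lt_of_lt_of_le hlam hγlam
  have hα1 : 1 ≤ α := by
    rw [hα]
    apply Real.one_le_rpow
    · rw [le_div_iff₀ hlam]; linarith
    · positivity
  have hαpos : 0 < α := lt_of_lt_of_le one_pos hα1
  have hαn : α ^ n = γ / lam := by
    rw [hα, ← Real.rpow_natCast ((γ / lam) ^ ((1:ℝ)/(n:ℝ))) n, ← Real.rpow_mul (by positivity)]
    have hne : (n : ℝ) ≠ 0 := by positivity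
    rw [one_div, inv_mul_cancel₀ hne, Real.rpow_one]
  set v : ℝ → ℝ := fun β => u β / (α * φ β) with hv
  have hden : ∀ β ∈ Set.Ioo (0:ℝ) 1, 0 < α * φ β := fun β hβ => mul_pos hαpos (hφ_pos β hβ)
  have hv1 : v β₁ < 1 := by
    rw [hv]; exact (div_lt_one (hden β₁ hβ₁)).mpr hβ₁lt
  have hvpos : ∀ β ∈ Set.Ioo (0:ℝ) 1, 0 < v β := fun β hβ =>
    div_pos (hu_pos β hβ) (hden β hβ)
  set c : ℝ := (v β₁ + 1) / 2 with hc
  have hc1 : c < 1 := by rw [hc]; linarith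
  have hcβ₁ : v β₁ < c := by rw [hc]; linarith
  -- from liminf at 0
  have E0 : ∀ᶠ β in nhdsWithin 0 (Set.Ioo (0:ℝ) 1), c < v β := by
    have : (c : EReal) < Filter.liminf (fun β => ((v β : ℝ) : EReal))
        (nhdsWithin 0 (Set.Ioo (0:ℝ) 1)) :=
      lt_of_lt_of_le (by exact_mod_cast hc1) h0
    exact (eventually_lt_of_lt_liminf this).mono fun β h => by exact_mod_cast h
  have E1 : ∀ᶠ β in nhdsWithin 1 (Set.Ioo (0:ℝ) 1), c < v β := by
    have : (c : EReal) < Filter.liminf (fun β => ((v β : ℝ) : EReal))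
        (nhdsWithin 1 (Set.Ioo (0:ℝ) 1)) :=
      lt_of_lt_of_le (by exact_mod_cast hc1) h1
    exact (eventually_lt_of_lt_liminf this).mono fun β h => by exact_mod_cast h
  rw [eventually_nhdsWithin_iff, Metric.eventually_nhds_iff] at E0 E1
  obtain ⟨ε₀, hε₀pos, hε₀⟩ := E0
  obtain ⟨ε₁, hε₁pos, hε₁⟩ := E1
  set a : ℝ := min (ε₀ / 2) β₁ with ha
  set b : ℝ := max (1 - ε₁ / 2) β₁ with hb
  have ha0 : 0 < a := lt_min (by linarith) hβ₁.1
  have hb1 : b < 1 := max_lt (by linarith) hβ₁.2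
  have hβ₁ab : β₁ ∈ Set.Icc a b := ⟨min_le_right _ _, le_max_right _ _⟩
  have hsub : Set.Icc a b ⊆ Set.Ioo (0:ℝ) 1 := fun x hx =>
    ⟨lt_of_lt_of_le ha0 hx.1, lt_of_le_of_lt hx.2 hb1⟩
  have hvcont : ContinuousOn v (Set.Icc a b) := by
    intro x hx
    have hx' := hsub hx
    have h1' : ContinuousWithinAt u (Set.Icc a b) x := (hu_cont x hx').mono hsub
    have h2' : ContinuousWithinAt φ (Set.Icc a b) x :=
      ((hφ_C2 x hx').continuousAt).continuousWithinAt
    exact h1'.div (continuousWithinAt_const.mul h2') (ne_of_gt (hden x hx'))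
  obtain ⟨β₀, hβ₀mem, hmin⟩ := isCompact_Icc.exists_isMinOn ⟨β₁, hβ₁ab⟩ hvcont
  have hβ₀ : β₀ ∈ Set.Ioo (0:ℝ) 1 := hsub hβ₀mem
  have hm1 : v β₀ < c := lt_of_le_of_lt (hmin hβ₁ab) hcβ₁
  -- global minimality
  have hglobal : ∀ β ∈ Set.Ioo (0:ℝ) 1, v β₀ ≤ v β := by
    intro β hβ
    by_cases hmem : β ∈ Set.Icc a b
    · exact hmin hmem
    · rw [Set.mem_Icc] at hmem
      push_neg at hmem
      rcases lt_or_ge β a with hlt | hge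
      · have hd : dist β 0 < ε₀ := by
          rw [Real.dist_eq, sub_zero, abs_of_pos hβ.1]
          have : a ≤ ε₀ / 2 := min_le_left _ _
          linarith
        exact le_of_lt (lt_trans hm1 (hε₀ hd hβ))
      · have hbβ : b < β := hmem hge
        have hd : dist β 1 < ε₁ := by
          rw [Real.dist_eq, abs_of_neg (by linarith [hβ.2] : β - 1 < 0)]
          have : 1 - ε₁ / 2 ≤ b := le_max_left _ _
          linarith
        exact le_of_lt (lt_trans hm1 (hε₁ hd hβ))
  set m : ℝ := v β₀ with hmdef
  have hmpos : 0 < m := hvpos β₀ hβ₀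
  have hm1' : m < 1 := lt_trans hm1 hc1
  -- test function
  set ψ : ℝ → ℝ := fun β => (m * α) * φ β with hψ
  have hφd : DifferentiableAt ℝ φ β₀ := (hφ_C2 β₀ hβ₀).differentiableAt two_ne_zero
  have hψC2 : ContDiffAt ℝ 2 ψ β₀ := contDiffAt_const.mul (hφ_C2 β₀ hβ₀)
  have hψle : ∀ᶠ β in nhdsWithin β₀ (Set.Ioo (0:ℝ) 1), ψ β ≤ u β := by
    apply eventually_nhdsWithin_of_forall
    intro β hβ
    have h : m ≤ u β / (α * φ β) := hglobal β hβ
    have h' : m * (α * φ β) ≤ u β := (le_div_iff₀ (hden β hβ)).mp h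
    show (m * α) * φ β ≤ u β
    linarith [h']
  have hψeq : ψ β₀ = u β₀ := by
    show m * α * φ β₀ = u β₀
    have hm : m = u β₀ / (α * φ β₀) := rfl
    rw [hm, mul_assoc]
    exact div_mul_cancel₀ _ (ne_of_gt (hden β₀ hβ₀))
  have hvisc := hu_visc β₀ hβ₀ ψ hψC2 hψle hψeq
  have hd : deriv ψ β₀ = (m * α) * deriv φ β₀ := by
    rw [hψ]
    exact deriv_const_mul _ hφd
  set p : ℝ := deriv φ β₀ / ((n : ℝ) - 1) with hp
  have hψβ₀ : ψ β₀ = (m * α) * φ β₀ := rfl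
  rw [hψβ₀, hd] at hvisc
  have hdivp : (m * α) * deriv φ β₀ / ((n : ℝ) - 1) = (m * α) * p := by
    rw [hp]; ring
  rw [hdivp] at hvisc
  -- contradiction via the key algebraic lemma
  have hsα : m * α < α := by
    calc m * α < 1 * α := mul_lt_mul_of_pos_right hm1' hαpos
      _ = α := one_mul α
  have hkey := visc_key n hn α (m * α) p hα1 (by positivity) hsα
  have hφ0 := hφ_pos β₀ hβ₀
  have hφe := hφ_eq β₀ hβ₀
  rw [← hp] at hφe
  have heq : α ^ n * (φ β₀ * (1 + p ^ 2) ^ (((n : ℝ) - 1) / 2)) = 1 / lam := by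
    rw [hφe, hαn]
    field_simp
  have h7 : (m * α) * φ β₀ * (1 + ((m * α) * p) ^ 2) ^ (((n : ℝ) - 1) / 2) < 1 / lam := by
    calc (m * α) * φ β₀ * (1 + ((m * α) * p) ^ 2) ^ (((n : ℝ) - 1) / 2)
        = φ β₀ * ((m * α) * (1 + ((m * α) * p) ^ 2) ^ (((n : ℝ) - 1) / 2)) := by ring
      _ < φ β₀ * (α ^ n * (1 + p ^ 2) ^ (((n : ℝ) - 1) / 2)) :=
          mul_lt_mul_of_pos_left hkey hφ0
      _ = α ^ n * (φ β₀ * (1 + p ^ 2) ^ (((n : ℝ) - 1) / 2)) := by ring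
      _ = 1 / lam := heq
  exact absurd hvisc (not_le.mpr h7)
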